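/- arXiv:2205.00676 — 3 statements merged into one kernel-verified Lean document; each statement's English description precedes it below -/
import Mathlib

section
/- Let s ∈ (0,1) and G(x,y) = −log|x−y| for x, y on the unit circle. There exists C = C(s) such that for all u, v ∈ B(0, s), the quantity ∬_{∂B(0,1)×∂B(0,1)} (P(u,x) − P(v,x)) G(x,y) (P(u,y) − P(v,y)) dσ(x) dσ(y) is at most C |u − v|², where σ is the uniform probability measure on ∂B(0,1) and P is the Poisson kernel. -/
/-- The Poisson kernel of the unit disk: `P(x, y) = (1 - |x|²)/(2π |x - y|²)`. -/
noncomputable def poissonKernelUnitDisk (x y : ℂ) : ℝ :=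
  (1 - ‖x‖ ^ 2) / (2 * Real.pi * ‖x - y‖ ^ 2)

open Real intervalIntegral

lemma neg_log_le (x : ℝ) (hx : 0 < x) : -Real.log x ≤ 2 / Real.sqrt x := by
  have hs : 0 < Real.sqrt x := Real.sqrt_pos.2 hx
  have h1 := Real.log_le_sub_one_of_pos (show (0:ℝ) < 1 / Real.sqrt x by positivity)
  rw [Real.log_div one_ne_zero (ne_of_gt hs), Real.log_one, Real.log_sqrt hx.le] at h1
  have h2 : 2 / Real.sqrt x = 2 * (1 / Real.sqrt x) := by ring
  linarith

lemma log_two_pi_le : Real.log (2 * Real.pi) ≤ 2 := by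
  rw [Real.log_le_iff_le_exp (by positivity)]
  have h1 : Real.exp 2 = Real.exp 1 * Real.exp 1 := by
    rw [← Real.exp_add]; norm_num
  nlinarith [Real.exp_one_gt_d9, Real.pi_lt_d2]

lemma intInt_log : IntervalIntegrable Real.log MeasureTheory.volume 0 (2 * Real.pi) := by
  have hg : IntervalIntegrable (fun x : ℝ => 2 * x ^ (-(1/2) : ℝ) + 2) MeasureTheory.volume 0 (2 * Real.pi) :=
    ((intervalIntegrable_rpow' (by norm_num)).const_mul 2).add (intervalIntegrable_const)
  apply hg.mono_fun Real.measurable_log.aestronglyMeasurable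
  filter_upwards [MeasureTheory.ae_restrict_mem measurableSet_uIoc] with x hx
  rw [Set.uIoc_of_le (by positivity)] at hx
  obtain ⟨hx0, hx2⟩ := hx
  have hrp : x ^ (-(1/2) : ℝ) = 1 / Real.sqrt x := by
    rw [Real.rpow_neg hx0.le, Real.sqrt_eq_rpow]
    simp [one_div]
  have hrpos : (0:ℝ) ≤ x ^ (-(1/2) : ℝ) := Real.rpow_nonneg hx0.le _
  have hR : |(2:ℝ) * x ^ (-(1/2) : ℝ) + 2| = 2 * x ^ (-(1/2) : ℝ) + 2 := abs_of_nonneg (by positivity)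
  simp only [Real.norm_eq_abs, hR]
  rcases le_or_gt x 1 with h1 | h1
  · have : |Real.log x| = -Real.log x := abs_of_nonpos (Real.log_nonpos hx0.le h1)
    rw [this, hrp]
    have := neg_log_le x hx0
    have h2 : 2 * (1 / Real.sqrt x) = 2 / Real.sqrt x := by ring
    linarith [this, h2 ▸ le_refl (2 * (1 / Real.sqrt x))]
  · have : |Real.log x| = Real.log x := abs_of_nonneg (Real.log_nonneg h1.le)
    rw [this]
    have := Real.log_le_log (by linarith) hx2
    linarith [log_two_pi_le, this, mul_nonneg (by norm_num : (0:ℝ) ≤ 2) hrpos]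

lemma sin_lb {x : ℝ} (h0 : 0 ≤ x) (h1 : x ≤ Real.pi) :
    x * (Real.pi - x) / Real.pi ^ 2 ≤ Real.sin x := by
  have hpi := Real.pi_pos
  rcases le_or_gt x (Real.pi / 2) with h | h
  · have := Real.mul_le_sin h0 h
    have hkey : x * (Real.pi - x) / Real.pi ^ 2 ≤ 2 / Real.pi * x := by
      rw [div_le_iff₀ (by positivity)]
      have he : 2 / Real.pi * x * Real.pi ^ 2 = 2 * Real.pi * x := by
        field_simp
      rw [he]; nlinarith
    linarith
  · have h0' : 0 ≤ Real.pi - x := by linarith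
    have h1' : Real.pi - x ≤ Real.pi / 2 := by linarith
    have := Real.mul_le_sin h0' h1'
    rw [Real.sin_pi_sub] at this
    have hkey : x * (Real.pi - x) / Real.pi ^ 2 ≤ 2 / Real.pi * (Real.pi - x) := by
      rw [div_le_iff₀ (by positivity)]
      have he : 2 / Real.pi * (Real.pi - x) * Real.pi ^ 2 = 2 * Real.pi * (Real.pi - x) := by
        field_simp
      rw [he]; nlinarith
    linarith

noncomputable def G0 (t : ℝ) : ℝ := Real.log 2 - Real.log |Real.sin (t / 2)|

lemma G0_periodic : Function.Periodic G0 (2 * Real.pi) := by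
  intro t
  unfold G0
  have : (t + 2 * Real.pi) / 2 = t / 2 + Real.pi := by ring
  rw [this, Real.sin_add_pi, abs_neg]

lemma G0_nonneg (t : ℝ) : 0 ≤ G0 t := by
  unfold G0
  have h1 : Real.log |Real.sin (t / 2)| ≤ 0 :=
    Real.log_nonpos (abs_nonneg _) (abs_sin_le_one _)
  have h2 : (0:ℝ) ≤ Real.log 2 := Real.log_nonneg (by norm_num)
  linarith

lemma G0_le {t : ℝ} (h0 : 0 < t) (h2 : t ≤ 2 * Real.pi) :
    G0 t ≤ Real.log 2 + Real.log (4 * Real.pi ^ 2) - Real.log t - Real.log (2 * Real.pi - t) := by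
  have hpi := Real.pi_pos
  unfold G0
  rcases eq_or_lt_of_le h2 with rfl | h2'
  · -- t = 2π : sin(π) = 0
    rw [show (2 * Real.pi) / 2 = Real.pi by ring, Real.sin_pi, abs_zero, Real.log_zero, sub_self,
      Real.log_zero]
    have : Real.log (2 * Real.pi) ≤ Real.log (4 * Real.pi ^ 2) :=
      Real.log_le_log (by positivity) (by nlinarith [Real.pi_gt_three])
    linarith
  · have hs0 : 0 < t / 2 := by linarith
    have hs1 : t / 2 < Real.pi := by linarith
    have hsinpos : 0 < Real.sin (t / 2) := Real.sin_pos_of_pos_of_lt_pi hs0 hs1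
    have hlb : t * (2 * Real.pi - t) / (4 * Real.pi ^ 2) ≤ Real.sin (t / 2) := by
      have := sin_lb (le_of_lt hs0) (le_of_lt hs1)
      have he : t / 2 * (Real.pi - t / 2) / Real.pi ^ 2 = t * (2 * Real.pi - t) / (4 * Real.pi ^ 2) := by
        ring
      rw [he] at this; exact this
    have hlbpos : 0 < t * (2 * Real.pi - t) / (4 * Real.pi ^ 2) := by
      have : 0 < 2 * Real.pi - t := by linarith
      positivity
    have habs : |Real.sin (t / 2)| = Real.sin (t / 2) := abs_of_pos hsinpos
    rw [habs]
    have hlog : Real.log (t * (2 * Real.pi - t) / (4 * Real.pi ^ 2)) ≤ Real.log (Real.sin (t / 2)) :=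
      Real.log_le_log hlbpos hlb
    have ht2 : 0 < 2 * Real.pi - t := by linarith
    rw [Real.log_div (by positivity) (by positivity), Real.log_mul (ne_of_gt h0) (ne_of_gt ht2)] at hlog
    linarith

lemma G0_meas : Measurable G0 := by
  unfold G0
  exact measurable_const.sub (Real.measurable_log.comp
    ((Real.continuous_sin.comp (continuous_id.div_const 2)).abs.measurable))

lemma G0_intInt : IntervalIntegrable G0 MeasureTheory.volume 0 (2 * Real.pi) := by
  have hpi := Real.pi_pos
  have h2 : IntervalIntegrable (fun t : ℝ => Real.log (2 * Real.pi - t))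
      MeasureTheory.volume 0 (2 * Real.pi) := by
    have := (intInt_log.comp_sub_left (2 * Real.pi)).symm
    simpa using this
  have hg : IntervalIntegrable
      (fun t : ℝ => Real.log 2 + Real.log (4 * Real.pi ^ 2) - Real.log t - Real.log (2 * Real.pi - t))
      MeasureTheory.volume 0 (2 * Real.pi) :=
    ((intervalIntegrable_const.sub intInt_log).sub h2)
  apply hg.mono_fun G0_meas.aestronglyMeasurable
  filter_upwards [MeasureTheory.ae_restrict_mem measurableSet_uIoc] with t ht
  rw [Set.uIoc_of_le (by positivity)] at ht
  have h1 := G0_le ht.1 ht.2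
  have h0 := G0_nonneg t
  simp only [Real.norm_eq_abs]
  rw [abs_of_nonneg h0]
  exact h1.trans (le_abs_self _)

lemma G0_shift_intInt {θ : ℝ} (h0 : 0 ≤ θ) (h2 : θ ≤ 2 * Real.pi) :
    IntervalIntegrable (fun φ : ℝ => G0 (φ - θ)) MeasureTheory.volume 0 (2 * Real.pi) := by
  have hneg : IntervalIntegrable G0 MeasureTheory.volume (-(2 * Real.pi)) 0 := by
    have h := G0_intInt.comp_add_right (2 * Real.pi)
    have he : (fun x : ℝ => G0 (x + 2 * Real.pi)) = G0 := funext fun x => G0_periodic x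
    rw [he] at h
    simpa using h
  have hbig : IntervalIntegrable G0 MeasureTheory.volume (-(2 * Real.pi)) (2 * Real.pi) :=
    hneg.trans G0_intInt
  have hsub : IntervalIntegrable G0 MeasureTheory.volume (-θ) (2 * Real.pi - θ) := by
    apply hbig.mono_set
    rw [Set.uIcc_of_le (by linarith), Set.uIcc_of_le (by linarith)]
    exact Set.Icc_subset_Icc (by linarith) (by linarith)
  have := hsub.comp_sub_right θ
  simpa using this

lemma G0_shift_integral (θ : ℝ) :
    ∫ φ in (0:ℝ)..(2 * Real.pi), G0 (φ - θ) = ∫ t in (0:ℝ)..(2 * Real.pi), G0 t := by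
  rw [intervalIntegral.integral_comp_sub_right]
  have h := G0_periodic.intervalIntegral_add_eq (-θ) 0
  rw [show -θ + 2 * Real.pi = 2 * Real.pi - θ by ring, zero_add] at h
  simpa using h

lemma abs_circleMap_sub (θ φ : ℝ) :
    ‖circleMap 0 1 θ - circleMap 0 1 φ‖ = 2 * |Real.sin ((θ - φ) / 2)| := by
  have hre : (circleMap 0 1 θ - circleMap 0 1 φ).re = Real.cos θ - Real.cos φ := by
    simp [circleMap, Complex.exp_ofReal_mul_I_re]
  have him : (circleMap 0 1 θ - circleMap 0 1 φ).im = Real.sin θ - Real.sin φ := by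
    simp [circleMap, Complex.exp_ofReal_mul_I_im]
  rw [Complex.norm_def, Complex.normSq_apply, hre, him]
  have key : (Real.cos θ - Real.cos φ) * (Real.cos θ - Real.cos φ) +
      (Real.sin θ - Real.sin φ) * (Real.sin θ - Real.sin φ) =
      (2 * |Real.sin ((θ - φ) / 2)|) ^ 2 := by
    have h1 : Real.cos (θ - φ) = 2 * Real.cos ((θ - φ) / 2) ^ 2 - 1 := by
      rw [← Real.cos_two_mul, mul_div_cancel₀ _ (two_ne_zero)]
    have h6 : Real.sin ((θ - φ) / 2) ^ 2 + Real.cos ((θ - φ) / 2) ^ 2 = 1 :=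
      Real.sin_sq_add_cos_sq _
    have h2 : Real.cos (θ - φ) = Real.cos θ * Real.cos φ + Real.sin θ * Real.sin φ :=
      Real.cos_sub θ φ
    have h3 : Real.sin θ ^ 2 + Real.cos θ ^ 2 = 1 := Real.sin_sq_add_cos_sq θ
    have h4 : Real.sin φ ^ 2 + Real.cos φ ^ 2 = 1 := Real.sin_sq_add_cos_sq φ
    have h5 : |Real.sin ((θ - φ) / 2)| ^ 2 = Real.sin ((θ - φ) / 2) ^ 2 := sq_abs _
    nlinarith [h1, h2, h3, h4, h5, h6]
  rw [key, Real.sqrt_sq (by positivity)]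

lemma log_dom (θ φ : ℝ) :
    |Real.log (‖circleMap 0 1 θ - circleMap 0 1 φ‖)| ≤ Real.log 2 + G0 (φ - θ) := by
  have hnn : 0 ≤ Real.log 2 + G0 (φ - θ) :=
    add_nonneg (Real.log_nonneg (by norm_num)) (G0_nonneg _)
  rw [abs_circleMap_sub]
  have hsin : |Real.sin ((θ - φ) / 2)| = |Real.sin ((φ - θ) / 2)| := by
    rw [show (θ - φ) / 2 = -((φ - θ) / 2) by ring, Real.sin_neg, abs_neg]
  rw [hsin]
  set a := |Real.sin ((φ - θ) / 2)| with ha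
  rcases eq_or_lt_of_le (abs_nonneg (Real.sin ((φ - θ) / 2))) with h0 | h0
  · rw [ha, ← h0, mul_zero, Real.log_zero, abs_zero]; exact hnn
  · have ha1 : a ≤ 1 := abs_sin_le_one _
    have hlog : Real.log (2 * a) = Real.log 2 + Real.log a :=
      Real.log_mul two_ne_zero (ne_of_gt h0)
    have hG : G0 (φ - θ) = Real.log 2 - Real.log a := by rw [ha]; rfl
    rcases le_or_gt (2 * a) 1 with h1 | h1
    · rw [abs_of_nonpos (Real.log_nonpos (by positivity) h1), hlog, hG]
      have := Real.log_nonneg (show (1:ℝ) ≤ 2 by norm_num)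
      linarith
    · rw [abs_of_nonneg (Real.log_nonneg h1.le), hlog, hG]
      have : Real.log a ≤ 0 := Real.log_nonpos h0.le ha1
      linarith

set_option maxHeartbeats 1000000 in
lemma poisson_lip {s : ℝ} (hs1 : s < 1) {u v y : ℂ} (hu : ‖u‖ < s)
    (hv : ‖v‖ < s) (hy : ‖y‖ = 1) :
    |poissonKernelUnitDisk u y - poissonKernelUnitDisk v y| ≤
      3 / (Real.pi * (1 - s) ^ 4) * ‖u - v‖ := by
  have hpi := Real.pi_pos
  set A := ‖u‖ with hA
  set B := ‖v‖ with hB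
  set d := ‖u - v‖ with hd
  set a := ‖u - y‖ with ha
  set b := ‖v - y‖ with hb
  have hA0 : 0 ≤ A := norm_nonneg u
  have hB0 : 0 ≤ B := norm_nonneg v
  have hd0 : 0 ≤ d := norm_nonneg _
  have hs1' : 0 < 1 - s := by linarith
  have ha1 : 1 - s ≤ a := by
    have h := norm_sub_norm_le y u
    rw [norm_sub_rev y u, hy] at h
    linarith
  have hb1 : 1 - s ≤ b := by
    have h := norm_sub_norm_le y v
    rw [norm_sub_rev y v, hy] at h
    linarith
  have ha2 : a ≤ 2 := by
    have h : a ≤ A + B * 0 + 1 := by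
      have := norm_add_le u (-y)
      rw [norm_neg, ← sub_eq_add_neg, hy] at this; simpa using this
    nlinarith
  have hb2 : b ≤ 2 := by
    have h := norm_add_le v (-y)
    simp only [← sub_eq_add_neg, norm_neg, hy] at h
    rw [hb]; nlinarith
  have ha0 : 0 < a := lt_of_lt_of_le hs1' ha1
  have hb0 : 0 < b := lt_of_lt_of_le hs1' hb1
  have hAB : |A - B| ≤ d := abs_norm_sub_norm_le u v
  have hab : |a - b| ≤ d := by
    have h := abs_norm_sub_norm_le (u - y) (v - y)
    rw [sub_sub_sub_cancel_right] at h
    exact h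
  -- rewrite the difference
  have he : poissonKernelUnitDisk u y - poissonKernelUnitDisk v y =
      (B ^ 2 - A ^ 2) / (2 * Real.pi * a ^ 2) +
      (1 - B ^ 2) * (b ^ 2 - a ^ 2) / (2 * Real.pi * a ^ 2 * b ^ 2) := by
    unfold poissonKernelUnitDisk
    rw [← hA, ← hB, ← ha, ← hb]
    field_simp
    ring
  rw [he]
  clear he
  have hBA : |B - A| ≤ d := by rw [abs_sub_comm]; exact hAB
  have hba : |b - a| ≤ d := by rw [abs_sub_comm]; exact hab
  have hnum1 : |B ^ 2 - A ^ 2| ≤ 2 * d := by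
    have h1 : |B ^ 2 - A ^ 2| = (B + A) * |B - A| := by
      rw [← abs_of_nonneg (by positivity : (0:ℝ) ≤ B + A), ← abs_mul]
      congr 1; ring
    rw [h1]
    nlinarith [abs_nonneg (B - A)]
  have hnum2 : |b ^ 2 - a ^ 2| ≤ 4 * d := by
    have h1 : |b ^ 2 - a ^ 2| = (b + a) * |b - a| := by
      rw [← abs_of_nonneg (by positivity : (0:ℝ) ≤ b + a), ← abs_mul]
      congr 1; ring
    rw [h1]
    nlinarith [abs_nonneg (b - a)]
  have hB1 : B ≤ 1 := le_of_lt (lt_trans hv hs1)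
  have hBle : |1 - B ^ 2| ≤ 1 := by
    rw [abs_of_nonneg (by nlinarith [hB0, hB1])]
    nlinarith [hB0, hB1]
  have hsa : (1 - s) ^ 2 ≤ a ^ 2 := by nlinarith
  have hsb : (1 - s) ^ 2 ≤ b ^ 2 := by nlinarith
  have hden1 : 2 * Real.pi * (1 - s) ^ 2 ≤ 2 * Real.pi * a ^ 2 := by nlinarith
  have hden2 : 2 * Real.pi * (1 - s) ^ 4 ≤ 2 * Real.pi * a ^ 2 * b ^ 2 := by
    have h4 : (1 - s) ^ 4 = (1 - s) ^ 2 * (1 - s) ^ 2 := by ring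
    have hp : (0:ℝ) ≤ (1 - s) ^ 2 := by positivity
    nlinarith [mul_le_mul hsa hsb hp (by positivity : (0:ℝ) ≤ a ^ 2)]
  have t1 : |(B ^ 2 - A ^ 2) / (2 * Real.pi * a ^ 2)| ≤ 2 * d / (2 * Real.pi * (1 - s) ^ 2) := by
    rw [abs_div, abs_of_nonneg (by positivity : (0:ℝ) ≤ 2 * Real.pi * a ^ 2)]
    exact div_le_div₀ (by positivity) hnum1 (by positivity) hden1
  have t2 : |(1 - B ^ 2) * (b ^ 2 - a ^ 2) / (2 * Real.pi * a ^ 2 * b ^ 2)| ≤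
      4 * d / (2 * Real.pi * (1 - s) ^ 4) := by
    rw [abs_div, abs_of_nonneg (by positivity : (0:ℝ) ≤ 2 * Real.pi * a ^ 2 * b ^ 2), abs_mul]
    apply div_le_div₀ (by positivity) _ (by positivity) hden2
    calc |1 - B ^ 2| * |b ^ 2 - a ^ 2| ≤ 1 * (4 * d) :=
          mul_le_mul hBle hnum2 (abs_nonneg _) (by norm_num)
      _ = 4 * d := by ring
  have t1' : 2 * d / (2 * Real.pi * (1 - s) ^ 2) ≤ 2 * d / (2 * Real.pi * (1 - s) ^ 4) := by
    apply div_le_div_of_nonneg_left (by positivity) (by positivity)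
    have hs0 : 0 < s := lt_of_le_of_lt hA0 hu
    have h01 : (1 - s) ^ 2 ≤ 1 := by nlinarith
    have h02 : (0:ℝ) ≤ (1 - s) ^ 2 := by positivity
    nlinarith [mul_le_mul h01 (le_refl ((1-s)^2)) h02 (by norm_num : (0:ℝ) ≤ 1)]
  have he2 : 2 * d / (2 * Real.pi * (1 - s) ^ 4) + 4 * d / (2 * Real.pi * (1 - s) ^ 4)
      = 3 / (Real.pi * (1 - s) ^ 4) * d := by
    field_simp
    ring
  calc |(B ^ 2 - A ^ 2) / (2 * Real.pi * a ^ 2) +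
      (1 - B ^ 2) * (b ^ 2 - a ^ 2) / (2 * Real.pi * a ^ 2 * b ^ 2)|
      ≤ |(B ^ 2 - A ^ 2) / (2 * Real.pi * a ^ 2)| +
        |(1 - B ^ 2) * (b ^ 2 - a ^ 2) / (2 * Real.pi * a ^ 2 * b ^ 2)| := abs_add_le _ _
    _ ≤ 3 / (Real.pi * (1 - s) ^ 4) * d := by linarith

theorem stmt_10 (s : ℝ) (hs0 : 0 < s) (hs1 : s < 1) :
    ∃ C > 0, ∀ u v : ℂ, ‖u‖ < s → ‖v‖ < s →
      (1 / (2 * Real.pi)) ^ 2 *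
        ∫ θ in (0 : ℝ)..(2 * Real.pi), ∫ φ in (0 : ℝ)..(2 * Real.pi),
          (poissonKernelUnitDisk u (circleMap 0 1 θ) - poissonKernelUnitDisk v (circleMap 0 1 θ)) *
            (-Real.log ‖circleMap 0 1 θ - circleMap 0 1 φ‖) *
            (poissonKernelUnitDisk u (circleMap 0 1 φ) - poissonKernelUnitDisk v (circleMap 0 1 φ)) ≤
      C * ‖u - v‖ ^ 2 := by
  have hpi := Real.pi_pos
  have hlog2 : (0:ℝ) ≤ Real.log 2 := Real.log_nonneg (by norm_num)
  set K := ∫ t in (0:ℝ)..(2 * Real.pi), G0 t with hK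
  have hK0 : 0 ≤ K :=
    intervalIntegral.integral_nonneg (by positivity) (fun t _ => G0_nonneg t)
  set L := 3 / (Real.pi * (1 - s) ^ 4) with hL
  have hL0 : 0 < L := by
    have : (0:ℝ) < 1 - s := by linarith
    positivity
  have hS0 : 0 ≤ 2 * Real.pi * Real.log 2 + K := by positivity
  refine ⟨(1 / (2 * Real.pi)) ^ 2 * (L ^ 2 * (2 * Real.pi * Real.log 2 + K)) * (2 * Real.pi) + 1,
    by positivity, ?_⟩
  intro u v hu hv
  set d := ‖u - v‖ with hd
  have hd0 : 0 ≤ d := norm_nonneg _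
  set M := L * d with hM
  have hM0 : 0 ≤ M := mul_nonneg hL0.le hd0
  set B := M * M * (2 * Real.pi * Real.log 2 + K) with hB
  have hcm : ∀ t : ℝ, ‖circleMap 0 1 t‖ = 1 := by
    intro t; rw [norm_circleMap_zero]; norm_num
  have hD : ∀ t : ℝ,
      |poissonKernelUnitDisk u (circleMap 0 1 t) - poissonKernelUnitDisk v (circleMap 0 1 t)| ≤ M := by
    intro t
    exact poisson_lip hs1 hu hv (hcm t)
  -- inner integral bound
  have inner_bound : ∀ θ ∈ Set.uIoc (0:ℝ) (2 * Real.pi),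
      ‖∫ φ in (0:ℝ)..(2 * Real.pi),
        (poissonKernelUnitDisk u (circleMap 0 1 θ) - poissonKernelUnitDisk v (circleMap 0 1 θ)) *
          (-Real.log (‖circleMap 0 1 θ - circleMap 0 1 φ‖)) *
          (poissonKernelUnitDisk u (circleMap 0 1 φ) - poissonKernelUnitDisk v (circleMap 0 1 φ))‖ ≤ B := by
    intro θ hθ
    rw [Set.uIoc_of_le (by positivity)] at hθ
    have hint : IntervalIntegrable (fun φ : ℝ => M * M * (Real.log 2 + G0 (φ - θ)))
        MeasureTheory.volume 0 (2 * Real.pi) :=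
      (intervalIntegrable_const.add (G0_shift_intInt hθ.1.le hθ.2)).const_mul (M * M)
    have hbd : ∀ᵐ (φ : ℝ) ∂(MeasureTheory.volume.restrict (Set.uIoc (0:ℝ) (2 * Real.pi))),
        ‖(poissonKernelUnitDisk u (circleMap 0 1 θ) - poissonKernelUnitDisk v (circleMap 0 1 θ)) *
          (-Real.log (‖circleMap 0 1 θ - circleMap 0 1 φ‖)) *
          (poissonKernelUnitDisk u (circleMap 0 1 φ) - poissonKernelUnitDisk v (circleMap 0 1 φ))‖ ≤
          M * M * (Real.log 2 + G0 (φ - θ)) := by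
      filter_upwards with φ
      have hnn : 0 ≤ Real.log 2 + G0 (φ - θ) := add_nonneg hlog2 (G0_nonneg _)
      have hlogb : |(-Real.log (‖circleMap 0 1 θ - circleMap 0 1 φ‖))| ≤
          Real.log 2 + G0 (φ - θ) := by
        rw [abs_neg]; exact log_dom θ φ
      have h1 : ‖(poissonKernelUnitDisk u (circleMap 0 1 θ) - poissonKernelUnitDisk v (circleMap 0 1 θ)) *
          (-Real.log (‖circleMap 0 1 θ - circleMap 0 1 φ‖)) *
          (poissonKernelUnitDisk u (circleMap 0 1 φ) - poissonKernelUnitDisk v (circleMap 0 1 φ))‖ =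
          |poissonKernelUnitDisk u (circleMap 0 1 θ) - poissonKernelUnitDisk v (circleMap 0 1 θ)| *
          |(-Real.log (‖circleMap 0 1 θ - circleMap 0 1 φ‖))| *
          |poissonKernelUnitDisk u (circleMap 0 1 φ) - poissonKernelUnitDisk v (circleMap 0 1 φ)| := by
        rw [Real.norm_eq_abs, abs_mul, abs_mul]
      rw [h1]
      have h2 : |poissonKernelUnitDisk u (circleMap 0 1 θ) - poissonKernelUnitDisk v (circleMap 0 1 θ)| *
          |(-Real.log (‖circleMap 0 1 θ - circleMap 0 1 φ‖))| *
          |poissonKernelUnitDisk u (circleMap 0 1 φ) - poissonKernelUnitDisk v (circleMap 0 1 φ)| ≤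
          M * (Real.log 2 + G0 (φ - θ)) * M := by
        apply mul_le_mul _ (hD φ) (abs_nonneg _) (by positivity)
        exact mul_le_mul (hD θ) hlogb (abs_nonneg _) hM0
      calc _ ≤ M * (Real.log 2 + G0 (φ - θ)) * M := h2
        _ = M * M * (Real.log 2 + G0 (φ - θ)) := by ring
    have hle := intervalIntegral.norm_integral_le_of_norm_le (by positivity)
      (by filter_upwards [(MeasureTheory.ae_restrict_iff' measurableSet_uIoc).1 hbd] with φ h hφ
          exact h (by rw [Set.uIoc_of_le (by positivity)]; exact hφ)) hint
    refine hle.trans ?_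
    have hg : ∫ φ in (0:ℝ)..(2 * Real.pi), M * M * (Real.log 2 + G0 (φ - θ)) = B := by
      rw [intervalIntegral.integral_const_mul]
      have hadd : ∫ φ in (0:ℝ)..(2 * Real.pi), (Real.log 2 + G0 (φ - θ)) =
          (∫ _ in (0:ℝ)..(2 * Real.pi), Real.log 2) +
          ∫ φ in (0:ℝ)..(2 * Real.pi), G0 (φ - θ) :=
        intervalIntegral.integral_add intervalIntegrable_const
          (G0_shift_intInt hθ.1.le hθ.2)
      rw [hadd, G0_shift_integral, intervalIntegral.integral_const, ← hK, hB]
      simp only [smul_eq_mul, sub_zero]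
      try ring
    rw [hg]
  have outer := intervalIntegral.norm_integral_le_of_norm_le_const inner_bound
  rw [sub_zero, abs_of_nonneg (by positivity : (0:ℝ) ≤ 2 * Real.pi)] at outer
  set I := ∫ θ in (0:ℝ)..(2 * Real.pi), ∫ φ in (0:ℝ)..(2 * Real.pi),
      (poissonKernelUnitDisk u (circleMap 0 1 θ) - poissonKernelUnitDisk v (circleMap 0 1 θ)) *
        (-Real.log (‖circleMap 0 1 θ - circleMap 0 1 φ‖)) *
        (poissonKernelUnitDisk u (circleMap 0 1 φ) - poissonKernelUnitDisk v (circleMap 0 1 φ)) with hI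
  have hIle : I ≤ B * (2 * Real.pi) := le_trans (le_abs_self I) outer
  have hstep : (1 / (2 * Real.pi)) ^ 2 * I ≤
      (1 / (2 * Real.pi)) ^ 2 * (B * (2 * Real.pi)) :=
    mul_le_mul_of_nonneg_left hIle (by positivity)
  refine hstep.trans ?_
  have hMM : M * M = L ^ 2 * d ^ 2 := by rw [hM]; ring
  have heq : (1 / (2 * Real.pi)) ^ 2 * (B * (2 * Real.pi)) =
      (1 / (2 * Real.pi)) ^ 2 * (L ^ 2 * (2 * Real.pi * Real.log 2 + K)) * (2 * Real.pi) * d ^ 2 := by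
    rw [hB, hMM]; ring
  rw [heq]
  have hd2 : 0 ≤ d ^ 2 := by positivity
  nlinarith [hd2, mul_nonneg (mul_nonneg (mul_nonneg
    (by positivity : (0:ℝ) ≤ (1 / (2 * Real.pi)) ^ 2)
    (by positivity : (0:ℝ) ≤ L ^ 2)) hS0) (by positivity : (0:ℝ) ≤ 2 * Real.pi)]
end

section
/- Let (Ω, F, P) be a probability space and {F_j}_{j=1}^n, {F̃_j}_{j=1}^n, {H_j}_{j=1}^n events satisfying: (P1) F_j ⊆ F̃_j ∪ H_j for all j; (P2) F̃_j is independent of the σ-algebra generated by all H_i (i = 1,…,n) and all F̃_i with i ≠ j; (P3) P(F̃_j) ≤ c for some c ∈ (0,1). Let S := {j : H_j does not occur} (a random subset of {1,…,n}). Then for any K ∈ {1,…,n}: P(∩_{j=1}^n F_j) ≤ c^K + P(|S| < K). -/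
open MeasureTheory

theorem stmt_12 {Ω : Type*} [MeasurableSpace Ω] (P : Measure Ω) [IsProbabilityMeasure P]
    (n : ℕ) (F Ft H : Fin n → Set Ω)
    (hF : ∀ j, MeasurableSet (F j)) (hFt : ∀ j, MeasurableSet (Ft j))
    (hH : ∀ j, MeasurableSet (H j))
    (hP1 : ∀ j, F j ⊆ Ft j ∪ H j)
    (hP2 : ∀ j, ProbabilityTheory.Indep (MeasurableSpace.generateFrom {Ft j})
      (MeasurableSpace.generateFrom (Set.range H ∪ {s | ∃ i, i ≠ j ∧ s = Ft i})) P)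
    (c : ℝ) (hc0 : 0 < c) (hc1 : c < 1) (hP3 : ∀ j, P (Ft j) ≤ ENNReal.ofReal c)
    (K : ℕ) (hK : 1 ≤ K) (hKn : K ≤ n) :
    P (⋂ j, F j) ≤ ENNReal.ofReal c ^ K +
      P {ω | ({j | ω ∉ H j} : Set (Fin n)).ncard < K} := by
  classical
  have hHle : MeasurableSpace.generateFrom (Set.range H) ≤ ‹MeasurableSpace Ω› := by
    apply MeasurableSpace.generateFrom_le
    rintro s ⟨j, rfl⟩; exact hH j
  -- peeling lemma
  have peel : ∀ (T : Finset (Fin n)) (B : Set Ω),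
      MeasurableSet[MeasurableSpace.generateFrom (Set.range H)] B →
      P ((⋂ j ∈ T, Ft j) ∩ B) ≤ ENNReal.ofReal c ^ T.card * P B := by
    intro T
    induction T using Finset.induction with
    | empty => intro B hB; simp
    | @insert j T hj ih =>
      intro B hB
      have hrw : (⋂ i ∈ insert j T, Ft i) ∩ B = Ft j ∩ ((⋂ i ∈ T, Ft i) ∩ B) := by
        rw [Finset.set_biInter_insert, Set.inter_assoc]
      have hBm2 : MeasurableSet[MeasurableSpace.generateFrom
          (Set.range H ∪ {s | ∃ i, i ≠ j ∧ s = Ft i})] B :=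
        MeasurableSpace.generateFrom_mono Set.subset_union_left _ hB
      have hFtm2 : ∀ i ∈ T, MeasurableSet[MeasurableSpace.generateFrom
          (Set.range H ∪ {s | ∃ i, i ≠ j ∧ s = Ft i})] (Ft i) := by
        intro i hi
        exact MeasurableSpace.measurableSet_generateFrom
          (Or.inr ⟨i, fun h => hj (h ▸ hi), rfl⟩)
      have hrest : MeasurableSet[MeasurableSpace.generateFrom
          (Set.range H ∪ {s | ∃ i, i ≠ j ∧ s = Ft i})] ((⋂ i ∈ T, Ft i) ∩ B) :=
        MeasurableSet.inter (Finset.measurableSet_biInter T hFtm2) hBm2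
      have hmul : P (Ft j ∩ ((⋂ i ∈ T, Ft i) ∩ B))
          = P (Ft j) * P ((⋂ i ∈ T, Ft i) ∩ B) :=
        (ProbabilityTheory.Indep_iff _ _ _).1 (hP2 j) (Ft j)
          ((⋂ i ∈ T, Ft i) ∩ B)
          (MeasurableSpace.measurableSet_generateFrom rfl) hrest
      rw [hrw, hmul, Finset.card_insert_of_notMem hj, pow_succ, mul_comm (_ ^ T.card),
        mul_assoc]
      exact mul_le_mul' (hP3 j) (ih B hB)
  -- the random finset S
  set Sf : Ω → Finset (Fin n) := fun ω => Finset.univ.filter (fun j => ω ∉ H j) with hSf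
  set B : Finset (Fin n) → Set Ω := fun s => {ω | Sf ω = s} with hB
  have hBmH : ∀ s, MeasurableSet[MeasurableSpace.generateFrom (Set.range H)] (B s) := by
    intro s
    have heq : B s = ⋂ j, (if j ∈ s then (H j)ᶜ else H j) := by
      ext ω
      simp only [hB, Set.mem_setOf_eq, Set.mem_iInter, Finset.ext_iff, hSf,
        Finset.mem_filter, Finset.mem_univ, true_and]
      constructor
      · intro h j
        by_cases hjs : j ∈ s <;> simp only [hjs, if_true, if_false, Set.mem_compl_iff]
        · exact (h j).2 hjs
        · by_contra hcon; exact hjs ((h j).1 hcon)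
      · intro h j
        have := h j
        by_cases hjs : j ∈ s <;>
          simp only [hjs, if_true, if_false, Set.mem_compl_iff] at this <;>
          tauto
    rw [heq]
    apply MeasurableSet.iInter
    intro j
    have hHj : MeasurableSet[MeasurableSpace.generateFrom (Set.range H)] (H j) :=
      MeasurableSpace.measurableSet_generateFrom ⟨j, rfl⟩
    by_cases hjs : j ∈ s
    · simpa [hjs] using hHj.compl
    · simpa [hjs] using hHj
  have hBmeas : ∀ s, MeasurableSet (B s) := fun s => hHle _ (hBmH s)
  have hFmeas : MeasurableSet (⋂ j, F j) := MeasurableSet.iInter hF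
  have hdisj : ∀ s t : Finset (Fin n), s ≠ t → Disjoint (B s) (B t) := by
    intro s t hst
    refine Set.disjoint_left.2 fun ω hs ht => hst ?_
    exact hs.symm.trans ht
  have hPD : ∀ (t : Finset (Finset (Fin n))), P (⋃ s ∈ t, B s) = ∑ s ∈ t, P (B s) :=
    fun t => measure_biUnion_finset
      (fun s _ u _ h => hdisj s u h) (fun s _ => hBmeas s)
  have hPDF : ∀ (t : Finset (Finset (Fin n))),
      P (⋃ s ∈ t, B s ∩ ⋂ j, F j) = ∑ s ∈ t, P (B s ∩ ⋂ j, F j) :=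
    fun t => measure_biUnion_finset
      (fun s _ u _ h => (hdisj s u h).mono Set.inter_subset_left Set.inter_subset_left)
      (fun s _ => (hBmeas s).inter hFmeas)
  -- key pointwise inclusion
  have hincl : ∀ s : Finset (Fin n), B s ∩ ⋂ j, F j ⊆ (⋂ j ∈ s, Ft j) ∩ B s := by
    intro s ω hω
    obtain ⟨hωB, hωF⟩ := hω
    refine ⟨Set.mem_biInter fun j hjs => ?_, hωB⟩
    have hωBs : Sf ω = s := hωB
    have hωHj : ω ∉ H j := by
      have : j ∈ Sf ω := hωBs ▸ hjs
      simpa [hSf] using this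
    rcases hP1 j (Set.mem_iInter.1 hωF j) with h | h
    · exact h
    · exact absurd h hωHj
  have hsum : P (⋂ j, F j) = ∑ s : Finset (Fin n), P (B s ∩ ⋂ j, F j) := by
    rw [← hPDF Finset.univ]
    congr 1
    ext ω
    simp only [Set.mem_iUnion, Finset.mem_univ, Set.mem_inter_iff, exists_prop, true_and]
    constructor
    · intro h; exact ⟨Sf ω, rfl, h⟩
    · rintro ⟨s, -, h⟩; exact h
  have hle1 : ENNReal.ofReal c ≤ 1 := by
    rw [ENNReal.ofReal_le_one]; exact hc1.le
  -- bound for large sets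
  have hbig : ∑ s ∈ Finset.univ.filter (fun s : Finset (Fin n) => K ≤ s.card),
      P (B s ∩ ⋂ j, F j) ≤ ENNReal.ofReal c ^ K := by
    calc ∑ s ∈ Finset.univ.filter (fun s : Finset (Fin n) => K ≤ s.card),
        P (B s ∩ ⋂ j, F j)
        ≤ ∑ s ∈ Finset.univ.filter (fun s : Finset (Fin n) => K ≤ s.card),
          ENNReal.ofReal c ^ K * P (B s) := by
          apply Finset.sum_le_sum
          intro s hs
          have hsK : K ≤ s.card := (Finset.mem_filter.1 hs).2
          calc P (B s ∩ ⋂ j, F j) ≤ P ((⋂ j ∈ s, Ft j) ∩ B s) :=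
                measure_mono (hincl s)
            _ ≤ ENNReal.ofReal c ^ s.card * P (B s) := peel s (B s) (hBmH s)
            _ ≤ ENNReal.ofReal c ^ K * P (B s) :=
                mul_le_mul' (pow_le_pow_right_of_le_one' hle1 hsK) le_rfl
      _ = ENNReal.ofReal c ^ K *
          ∑ s ∈ Finset.univ.filter (fun s : Finset (Fin n) => K ≤ s.card), P (B s) := by
          rw [Finset.mul_sum]
      _ ≤ ENNReal.ofReal c ^ K * 1 := by
          gcongr
          rw [← hPD]
          exact prob_le_one
      _ = ENNReal.ofReal c ^ K := mul_one _
  -- bound for small sets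
  have hsmall : ∑ s ∈ Finset.univ.filter (fun s : Finset (Fin n) => s.card < K),
      P (B s ∩ ⋂ j, F j) ≤ P {ω | ({j | ω ∉ H j} : Set (Fin n)).ncard < K} := by
    calc ∑ s ∈ Finset.univ.filter (fun s : Finset (Fin n) => s.card < K),
        P (B s ∩ ⋂ j, F j)
        ≤ ∑ s ∈ Finset.univ.filter (fun s : Finset (Fin n) => s.card < K), P (B s) :=
          Finset.sum_le_sum fun s _ => measure_mono Set.inter_subset_left
      _ = P (⋃ s ∈ Finset.univ.filter (fun s : Finset (Fin n) => s.card < K), B s) :=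
          (hPD _).symm
      _ ≤ P {ω | ({j | ω ∉ H j} : Set (Fin n)).ncard < K} := by
          apply measure_mono
          intro ω hω
          simp only [Set.mem_iUnion, Finset.mem_filter, Finset.mem_univ, true_and,
            exists_prop] at hω
          obtain ⟨s, hsK, hωs⟩ := hω
          have hωBs : Sf ω = s := hωs
          have hncard : ({j | ω ∉ H j} : Set (Fin n)).ncard = (Sf ω).card := by
            rw [Set.ncard_eq_toFinset_card']
            congr 1
            ext j; simp [hSf]
          show ({j | ω ∉ H j} : Set (Fin n)).ncard < K
          rw [hncard, hωBs]
          exact hsK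
  have hsplitsum : ∑ s : Finset (Fin n), P (B s ∩ ⋂ j, F j) =
      (∑ s ∈ Finset.univ.filter (fun s : Finset (Fin n) => K ≤ s.card),
        P (B s ∩ ⋂ j, F j)) +
      ∑ s ∈ Finset.univ.filter (fun s : Finset (Fin n) => s.card < K),
        P (B s ∩ ⋂ j, F j) := by
    rw [← Finset.sum_filter_add_sum_filter_not Finset.univ
      (fun s : Finset (Fin n) => K ≤ s.card)]
    congr 2
    ext s
    simp [not_le]
  rw [hsum, hsplitsum]
  exact add_le_add hbig hsmall
end

section
/- Under assumptions (P1)–(P3) as above, P(∩_{j=1}^n F_j) ≤ E[c^{|S|}] where S = {j : H_j^c occurs}. -/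
open MeasureTheory

theorem stmt_13 {Ω : Type*} [MeasurableSpace Ω] (P : Measure Ω) [IsProbabilityMeasure P]
    (n : ℕ) (F Ft H : Fin n → Set Ω)
    (hF : ∀ j, MeasurableSet (F j)) (hFt : ∀ j, MeasurableSet (Ft j))
    (hH : ∀ j, MeasurableSet (H j))
    (hP1 : ∀ j, F j ⊆ Ft j ∪ H j)
    (hP2 : ∀ j, ProbabilityTheory.Indep (MeasurableSpace.generateFrom {Ft j})
      (MeasurableSpace.generateFrom (Set.range H ∪ {s | ∃ i, i ≠ j ∧ s = Ft i})) P)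
    (c : ℝ) (hc0 : 0 < c) (hc1 : c < 1) (hP3 : ∀ j, P (Ft j) ≤ ENNReal.ofReal c) :
    P (⋂ j, F j) ≤
      ∫⁻ ω, ENNReal.ofReal (c ^ ({j | ω ∉ H j} : Set (Fin n)).ncard) ∂P := by
  classical
  -- the partition sets
  set A : Finset (Fin n) → Set Ω := fun T => ⋂ j, (if j ∈ T then (H j)ᶜ else H j) with hA
  have hAmem : ∀ T ω, ω ∈ A T ↔ ∀ j, (ω ∉ H j ↔ j ∈ T) := by
    intro T ω
    simp only [hA, Set.mem_iInter]
    constructor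
    · intro h j
      have := h j
      by_cases hj : j ∈ T <;> simp [hj] at this ⊢ <;> tauto
    · intro h j
      by_cases hj : j ∈ T <;> simp only [hj, if_true, if_false]
      · exact (h j).2 hj
      · exact not_not.1 fun hn => hj ((h j).1 hn)
  have hAmeas : ∀ T, MeasurableSet[MeasurableSpace.generateFrom (Set.range H)] (A T) := by
    intro T
    apply MeasurableSet.iInter
    intro j
    have hgen : MeasurableSet[MeasurableSpace.generateFrom (Set.range H)] (H j) :=
      MeasurableSpace.measurableSet_generateFrom (Set.mem_range_self j)
    by_cases hj : j ∈ T <;> simp only [hj, if_true, if_false]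
    · exact hgen.compl
    · exact hgen
  have hmle0 : ∀ s, MeasurableSet[MeasurableSpace.generateFrom (Set.range H)] s →
      MeasurableSet s := by
    intro s hs
    refine MeasurableSpace.generateFrom_le ?_ s hs
    rintro t ⟨j, rfl⟩; exact hH j
  -- key independence lemma
  have key : ∀ (T : Finset (Fin n)) (B : Set Ω),
      MeasurableSet[MeasurableSpace.generateFrom (Set.range H)] B →
      P (B ∩ ⋂ i ∈ T, Ft i) ≤ ENNReal.ofReal c ^ T.card * P B := by
    intro T
    induction T using Finset.induction with
    | empty => intro B _; simp
    | @insert j T hj ih =>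
      intro B hB
      have hmle : MeasurableSpace.generateFrom (Set.range H) ≤ MeasurableSpace.generateFrom
          (Set.range H ∪ {s | ∃ i, i ≠ j ∧ s = Ft i}) :=
        MeasurableSpace.generateFrom_mono Set.subset_union_left
      have hBj : MeasurableSet[MeasurableSpace.generateFrom
          (Set.range H ∪ {s | ∃ i, i ≠ j ∧ s = Ft i})] (B ∩ ⋂ i ∈ T, Ft i) := by
        apply MeasurableSet.inter (hmle _ hB)
        apply MeasurableSet.biInter (Set.to_countable _)
        intro i hi
        exact MeasurableSpace.measurableSet_generateFrom
          (Or.inr ⟨i, fun h => hj (h ▸ hi), rfl⟩)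
      have hindep := (ProbabilityTheory.Indep_iff _ _ _).1 (hP2 j) (Ft j)
        (B ∩ ⋂ i ∈ T, Ft i) (MeasurableSpace.measurableSet_generateFrom rfl) hBj
      have heq : B ∩ ⋂ i ∈ insert j T, Ft i = Ft j ∩ (B ∩ ⋂ i ∈ T, Ft i) := by
        rw [Finset.set_biInter_insert]
        ext ω; simp only [Set.mem_inter_iff, Set.mem_iInter]; tauto
      rw [heq, hindep, Finset.card_insert_of_notMem hj, pow_succ]
      calc P (Ft j) * P (B ∩ ⋂ i ∈ T, Ft i)
          ≤ ENNReal.ofReal c * (ENNReal.ofReal c ^ T.card * P B) :=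
            mul_le_mul' (hP3 j) (ih B hB)
        _ = ENNReal.ofReal c ^ T.card * ENNReal.ofReal c * P B := by ring
  -- the intersection is covered by the partition pieces
  have hcover : (⋂ j, F j) ⊆ ⋃ T : Finset (Fin n), (A T ∩ ⋂ i ∈ T, Ft i) := by
    intro ω hω
    simp only [Set.mem_iInter] at hω
    refine Set.mem_iUnion.2 ⟨Finset.univ.filter (fun j => ω ∉ H j), ?_, ?_⟩
    · rw [hAmem]; intro j; simp
    · simp only [Set.mem_iInter, Finset.mem_filter]
      intro i hi
      rcases hP1 i (hω i) with h | h
      · exact h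
      · exact absurd h hi.2
  -- pointwise identity for the integrand
  have hpt : ∀ ω, ENNReal.ofReal (c ^ ({j | ω ∉ H j} : Set (Fin n)).ncard) =
      ∑ T : Finset (Fin n), (A T).indicator (fun _ => ENNReal.ofReal c ^ T.card) ω := by
    intro ω
    set T₀ : Finset (Fin n) := Finset.univ.filter (fun j => ω ∉ H j) with hT₀
    have hω0 : ω ∈ A T₀ := by rw [hAmem]; intro j; simp [hT₀]
    have huniq : ∀ T, ω ∈ A T → T = T₀ := by
      intro T hT
      rw [hAmem] at hT
      ext j; simp [hT₀, ← hT j]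
    rw [Finset.sum_eq_single T₀]
    · rw [Set.indicator_of_mem hω0, ← ENNReal.ofReal_pow hc0.le]
      congr 1
      have : ({j | ω ∉ H j} : Set (Fin n)) = ↑T₀ := by ext j; simp [hT₀]
      rw [this, Set.ncard_coe_finset]
    · intro T _ hne
      exact Set.indicator_of_notMem (fun h => hne (huniq T h)) _
    · intro h; exact absurd (Finset.mem_univ T₀) h
  calc P (⋂ j, F j) ≤ P (⋃ T : Finset (Fin n), (A T ∩ ⋂ i ∈ T, Ft i)) :=
        measure_mono hcover
    _ ≤ ∑ T : Finset (Fin n), P (A T ∩ ⋂ i ∈ T, Ft i) := by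
        rw [← tsum_fintype (L := SummationFilter.unconditional _)]; exact measure_iUnion_le _
    _ ≤ ∑ T : Finset (Fin n), ENNReal.ofReal c ^ T.card * P (A T) :=
        Finset.sum_le_sum fun T _ => key T (A T) (hAmeas T)
    _ = ∫⁻ ω, ENNReal.ofReal (c ^ ({j | ω ∉ H j} : Set (Fin n)).ncard) ∂P := by
        rw [show (fun ω => ENNReal.ofReal (c ^ ({j | ω ∉ H j} : Set (Fin n)).ncard)) =
            fun ω => ∑ T : Finset (Fin n),
              (A T).indicator (fun _ => ENNReal.ofReal c ^ T.card) ω from funext hpt]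
        rw [lintegral_finset_sum]
        · congr 1; ext T
          rw [lintegral_indicator (hmle0 _ (hAmeas T))]
          simp [mul_comm]
        · intro T _
          exact (measurable_const).indicator (hmle0 _ (hAmeas T))
end
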